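/- arXiv:2409.02063 — 3 statements merged into one kernel-verified Lean document; each statement's English description precedes it below -/
import Mathlib

section
/- For every natural number n ≥ 2, the line swap strategy on the path graph P_n, run for n−2 layers, reaches full connectivity: for every pair of distinct logical qubits a ≠ b in {0,…,n−1} there exists a time t with 0 ≤ t ≤ n−2 such that the positions σ_t(a) and σ_t(b) are adjacent in P_n (i.e., |σ_t(a) − σ_t(b)| = 1). -/
/-- Adjacency in the path graph `Pₙ` on vertices `{0, …, n-1}`:
two positions are adjacent iff they differ by exactly 1. -/
def PathAdj (n : ℕ) (a b : Fin n) : Prop :=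
  a.1 + 1 = b.1 ∨ b.1 + 1 = a.1

/-- The list of transpositions making up layer `t` (0-indexed) of the line swap
strategy on `Pₙ`: layer `t` is the product of the transpositions `(i, i+1)` over all
`i` with `i % 2 = t % 2` and `i + 1 ≤ n - 1` (so the even layer `E` comes first,
then the odd layer `O`, alternating). -/
def lineSwapList (n t : ℕ) : List (Equiv.Perm (Fin n)) :=
  (List.range n).filterMap (fun i =>
    if h : i % 2 = t % 2 ∧ i + 1 < n then
      some (Equiv.swap ⟨i, Nat.lt_of_succ_lt h.2⟩ ⟨i + 1, h.2⟩)
    else none)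

/-- Layer `t` of the line swap strategy (a product of disjoint transpositions). -/
def lineLayer (n t : ℕ) : Equiv.Perm (Fin n) :=
  (lineSwapList n t).prod

/-- Cumulative permutations of a swap strategy: `σ₀ = id` and `σ_{t+1} = π_{t+1} ∘ σ_t`,
where `layers t` is the `(t+1)`-st layer `π_{t+1}`. -/
def cumul {V : Type*} (layers : ℕ → Equiv.Perm V) : ℕ → Equiv.Perm V
  | 0 => 1
  | t + 1 => layers t * cumul layers t


lemma partial_apply (n t : ℕ) : ∀ (k p : ℕ) (hp : p < n),
    ((((List.range k).filterMap (fun i =>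
      if h : i % 2 = t % 2 ∧ i + 1 < n then
        some (Equiv.swap (⟨i, Nat.lt_of_succ_lt h.2⟩ : Fin n) ⟨i + 1, h.2⟩)
      else none)).prod) ⟨p, hp⟩).1 =
      if p % 2 = t % 2 ∧ p + 1 < n ∧ p < k then p + 1
      else if 0 < p ∧ (p - 1) % 2 = t % 2 ∧ p - 1 < k then p - 1
      else p := by
  intro k
  induction k with
  | zero => intro p hp; simp
  | succ k ih =>
    intro p hp
    rw [List.range_succ, List.filterMap_append, List.prod_append]
    simp only [List.filterMap_cons, List.filterMap_nil]
    by_cases h : k % 2 = t % 2 ∧ k + 1 < n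
    · rw [dif_pos h]
      simp only [List.prod_cons, List.prod_nil, mul_one]
      rw [Equiv.Perm.mul_apply]
      by_cases hpk : p = k
      · subst hpk
        have e1 : (Equiv.swap (⟨p, Nat.lt_of_succ_lt h.2⟩ : Fin n) ⟨p + 1, h.2⟩) ⟨p, hp⟩
            = ⟨p + 1, h.2⟩ := Equiv.swap_apply_left _ _
        rw [e1, ih (p+1) h.2]
        split_ifs <;> omega
      · by_cases hpk1 : p = k + 1
        · subst hpk1
          have e1 : (Equiv.swap (⟨k, Nat.lt_of_succ_lt h.2⟩ : Fin n) ⟨k + 1, h.2⟩) ⟨k+1, hp⟩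
              = ⟨k, Nat.lt_of_succ_lt h.2⟩ := Equiv.swap_apply_right _ _
          rw [e1, ih k (Nat.lt_of_succ_lt h.2)]
          split_ifs <;> omega
        · have e1 : (Equiv.swap (⟨k, Nat.lt_of_succ_lt h.2⟩ : Fin n) ⟨k + 1, h.2⟩) ⟨p, hp⟩
              = ⟨p, hp⟩ := by
            apply Equiv.swap_apply_of_ne_of_ne
            · exact fun hc => hpk (congrArg Fin.val hc)
            · exact fun hc => hpk1 (congrArg Fin.val hc)
          rw [e1, ih p hp]
          split_ifs <;> omega
    · rw [dif_neg h]
      simp only [List.prod_nil, mul_one]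
      rw [ih p hp]
      rw [Decidable.not_and_iff_or_not] at h
      split_ifs <;> omega

lemma lineLayer_apply (n t p : ℕ) (hp : p < n) :
    ((lineLayer n t) ⟨p, hp⟩).1 =
      if p % 2 = t % 2 ∧ p + 1 < n then p + 1
      else if 0 < p ∧ (p - 1) % 2 = t % 2 then p - 1
      else p := by
  have h := partial_apply n t n p hp
  rw [lineLayer, lineSwapList, h]
  split_ifs <;> omega

/-- Closed-form trajectory of the logical qubit starting at vertex `c`. -/
def posF (n c t : ℕ) : ℕ :=
  if c % 2 = 0 then (if t ≤ n - 1 - c then c + t else 2*n - 1 - c - t)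
  else (if t ≤ c then c - t else t - c - 1)

lemma posF_lt (n c t : ℕ) (hn : 2 ≤ n) (hc : c < n) (ht : t ≤ n - 2) : posF n c t < n := by
  unfold posF; split_ifs <;> omega

lemma pos_correct (n : ℕ) (hn : 2 ≤ n) :
    ∀ t, t ≤ n - 2 → ∀ (c : ℕ) (hc : c < n),
      ((cumul (lineLayer n) t) ⟨c, hc⟩).1 = posF n c t := by
  intro t
  induction t with
  | zero =>
    intro _ c hc
    show ((1 : Equiv.Perm (Fin n)) ⟨c, hc⟩).1 = posF n c 0
    unfold posF
    split_ifs <;> simp <;> omega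
  | succ t ih =>
    intro ht c hc
    have ht' : t ≤ n - 2 := by omega
    have h1 : (cumul (lineLayer n) t ⟨c, hc⟩ : Fin n)
        = ⟨posF n c t, posF_lt n c t hn hc ht'⟩ := Fin.ext (ih ht' c hc)
    show ((lineLayer n t * cumul (lineLayer n) t) ⟨c, hc⟩).1 = _
    rw [Equiv.Perm.mul_apply, h1, lineLayer_apply]
    unfold posF
    split_ifs <;> omega

lemma pos_correct' (n : ℕ) (hn : 2 ≤ n) (t : ℕ) (ht : t ≤ n - 2) (c : Fin n) :
    ((cumul (lineLayer n) t) c).1 = posF n c.1 t := by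
  obtain ⟨c, hc⟩ := c
  exact pos_correct n hn t ht c hc

lemma key (n A B : ℕ) (hn : 2 ≤ n) (hAB : A < B) (hB : B < n) :
    ∃ t ≤ n - 2, (posF n A t + 1 = posF n B t ∨ posF n B t + 1 = posF n A t) := by
  by_cases h1 : B = A + 1
  · exact ⟨0, by omega, by unfold posF; split_ifs <;> omega⟩
  by_cases hA : A % 2 = 0 <;> by_cases hBp : B % 2 = 0
  · exact ⟨n - 1 - (A + B) / 2, by omega, by unfold posF; split_ifs <;> omega⟩
  · exact ⟨(B - A - 1) / 2, by omega, by unfold posF; split_ifs <;> omega⟩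
  · exact ⟨n - 1 - (B - A - 1) / 2, by omega, by unfold posF; split_ifs <;> omega⟩
  · exact ⟨(A + B) / 2, by omega, by unfold posF; split_ifs <;> omega⟩

/-- For every `n ≥ 2`, the line swap strategy on `Pₙ`, run for `n - 2`
layers, reaches full connectivity: for every pair of distinct logical qubits `a ≠ b`
there is a time `t ≤ n - 2` such that `σ_t a` and `σ_t b` are adjacent in `Pₙ`. -/
theorem line_strategy_reaches_full_connectivity (n : ℕ) (hn : 2 ≤ n) :
    ∀ a b : Fin n, a ≠ b → ∃ t ≤ n - 2,
      PathAdj n (cumul (lineLayer n) t a) (cumul (lineLayer n) t b) := by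
  intro a b hab
  have hne : a.1 ≠ b.1 := fun h => hab (Fin.ext h)
  rcases Nat.lt_or_ge a.1 b.1 with h | h
  · obtain ⟨t, ht, hadj⟩ := key n a.1 b.1 hn h b.2
    refine ⟨t, ht, ?_⟩
    unfold PathAdj
    rw [pos_correct' n hn t ht a, pos_correct' n hn t ht b]
    exact hadj
  · have h' : b.1 < a.1 := by omega
    obtain ⟨t, ht, hadj⟩ := key n b.1 a.1 hn h' a.2
    refine ⟨t, ht, ?_⟩
    unfold PathAdj
    rw [pos_correct' n hn t ht a, pos_correct' n hn t ht b]
    exact hadj.symm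
end

section
/- For every natural number n ≥ 2, every swap strategy on the path graph P_n that reaches full connectivity consists of at least n−2 swap layers; hence the alternating odd/even line swap strategy, which uses exactly n−2 layers, is optimal in the number of layers. -/
/-- A swap layer on the path graph `Pₙ`: a permutation of the vertices that is a
product of transpositions over pairwise vertex-disjoint edges, i.e. an involution
moving every non-fixed vertex to an adjacent vertex. -/
def IsPathSwapLayer (n : ℕ) (π : Equiv.Perm (Fin n)) : Prop :=
  π * π = 1 ∧ ∀ v : Fin n, π v ≠ v → PathAdj n v (π v)

/-- For every `n ≥ 2`, every swap strategy on the path graph `Pₙ`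
that reaches full connectivity consists of at least `n - 2` swap layers. -/
theorem line_strategy_optimal (n : ℕ) (hn : 2 ≤ n) (k : ℕ)
    (layers : ℕ → Equiv.Perm (Fin n))
    (hlayers : ∀ t < k, IsPathSwapLayer n (layers t))
    (hfull : ∀ a b : Fin n, a ≠ b → ∃ t ≤ k,
      PathAdj n (cumul layers t a) (cumul layers t b)) :
    n - 2 ≤ k := by
  classical
  set x : Fin n := ⟨0, by omega⟩ with hxdef
  -- movement lemma: each layer moves a vertex by at most 1
  have hmove : ∀ t < k, ∀ v : Fin n,
      ((layers t) v).1 ≤ v.1 + 1 ∧ v.1 ≤ ((layers t) v).1 + 1 := by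
    intro t ht v
    rcases eq_or_ne ((layers t) v) v with h | h
    · rw [h]; omega
    · rcases (hlayers t ht).2 v h with h1 | h1 <;> omega
  have hsucc : ∀ t (y : Fin n), cumul layers (t+1) y = layers t (cumul layers t y) := by
    intro t y; rfl
  -- crossing lemma
  have hcross : ∀ t ≤ k, ∀ y : Fin n, y ≠ x →
      ((cumul layers t) y).1 < ((cumul layers t) x).1 →
      ∃ s < t, PathAdj n ((cumul layers s) x) ((cumul layers s) y) := by
    intro t
    induction t with
    | zero =>
      intro _ y hy hlt
      have : ((1 : Equiv.Perm (Fin n)) y).1 < ((1 : Equiv.Perm (Fin n)) x).1 := hlt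
      simp [hxdef] at this
    | succ t ih =>
      intro ht y hy hlt
      have ht' : t ≤ k := by omega
      have htk : t < k := by omega
      have hne : ((cumul layers t) y).1 ≠ ((cumul layers t) x).1 := by
        intro h
        exact hy ((cumul layers t).injective (Fin.ext h))
      rcases lt_or_gt_of_ne hne with hlt' | hgt
      · obtain ⟨s, hs, h⟩ := ih ht' y hy hlt'
        exact ⟨s, by omega, h⟩
      · -- they cross at this step: adjacent at time t
        refine ⟨t, by omega, ?_⟩
        rw [hsucc, hsucc] at hlt
        have h1 := hmove t htk (cumul layers t y)
        have h2 := hmove t htk (cumul layers t x)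
        left
        omega
  -- the set of qubits met by x up to time t
  set A : ℕ → Finset (Fin n) := fun t => Finset.univ.filter
    (fun y => y ≠ x ∧ ∃ s ≤ t, PathAdj n ((cumul layers s) x) ((cumul layers s) y))
    with hAdef
  have hcard : ∀ t ≤ k, (A t).card ≤ t + 1 := by
    intro t
    induction t with
    | zero =>
      intro _
      have hsub : A 0 ⊆ {(⟨1, by omega⟩ : Fin n)} := by
        intro y hy
        rw [hAdef] at hy
        simp only [Finset.mem_filter, Finset.mem_univ, true_and] at hy
        obtain ⟨hyx, s, hs, hadj⟩ := hy
        interval_cases s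
        have hadj' : (x.1 + 1 = y.1 ∨ y.1 + 1 = x.1) := hadj
        simp only [Finset.mem_singleton]
        apply Fin.ext
        simp [hxdef] at hadj' ⊢
        omega
      exact (Finset.card_le_card hsub).trans (by simp)
    | succ t ih =>
      intro ht
      have ht' : t ≤ k := by omega
      have htk : t < k := by omega
      have hsub : A (t+1) ⊆ A t ∪ Finset.univ.filter
          (fun y => ((cumul layers (t+1)) y).1 = ((cumul layers (t+1)) x).1 + 1) := by
        intro y hy
        rw [hAdef] at hy
        simp only [Finset.mem_filter, Finset.mem_univ, true_and] at hy
        obtain ⟨hyx, s, hs, hadj⟩ := hy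
        rcases Nat.lt_or_ge s (t+1) with hst | hst
        · -- witness at time ≤ t
          apply Finset.mem_union_left
          rw [hAdef]
          simp only [Finset.mem_filter, Finset.mem_univ, true_and]
          exact ⟨hyx, s, by omega, hadj⟩
        · have hseq : s = t + 1 := by omega
          subst hseq
          rcases hadj with hR | hL
          · -- right neighbor at time t+1
            apply Finset.mem_union_right
            simp only [Finset.mem_filter, Finset.mem_univ, true_and]
            omega
          · -- left neighbor at time t+1: was met earlier
            have hlt : ((cumul layers (t+1)) y).1 < ((cumul layers (t+1)) x).1 := by omega
            obtain ⟨s', hs', h'⟩ := hcross (t+1) ht y hyx hlt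
            apply Finset.mem_union_left
            rw [hAdef]
            simp only [Finset.mem_filter, Finset.mem_univ, true_and]
            exact ⟨hyx, s', by omega, h'⟩
      have hone : (Finset.univ.filter
          (fun y => ((cumul layers (t+1)) y).1 = ((cumul layers (t+1)) x).1 + 1)).card ≤ 1 := by
        apply Finset.card_le_one.2
        intro a ha b hb
        simp only [Finset.mem_filter, Finset.mem_univ, true_and] at ha hb
        exact (cumul layers (t+1)).injective (Fin.ext (by omega))
      calc (A (t+1)).card ≤ (A t ∪ _).card := Finset.card_le_card hsub
        _ ≤ (A t).card + _ := Finset.card_union_le _ _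
        _ ≤ (t + 1) + 1 := add_le_add (ih ht') hone
  -- every other qubit is in A k
  have hall : Finset.univ.erase x ⊆ A k := by
    intro y hy
    rw [Finset.mem_erase] at hy
    rw [hAdef]
    simp only [Finset.mem_filter, Finset.mem_univ, true_and]
    refine ⟨hy.1, ?_⟩
    obtain ⟨t, htk, hadj⟩ := hfull x y (Ne.symm hy.1)
    exact ⟨t, htk, hadj⟩
  have h1 : n - 1 ≤ (A k).card := by
    have := Finset.card_le_card hall
    rwa [Finset.card_erase_of_mem (Finset.mem_univ x), Finset.card_univ,
      Fintype.card_fin] at this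
  have h2 := hcard k le_rfl
  omega
end

section
/- For every natural number B ≥ 2, the busNNN swap strategy run for 4B−5 layers reaches full connectivity in the busNNN column model: for every pair of distinct columns a ≠ b in {0,…,2B−1} there exists a layer-time t with 0 ≤ t ≤ 4B−5 such that the positions σ_t(a) and σ_t(b) lie on the same bus, i.e., {σ_t(a), σ_t(b)} = {2j, 2j+1} for some j ∈ {0,…,B−1}, where σ_t is the cumulative permutation after the first t layers (σ₀ = id). -/
/-- The inter-bus layer `I` on the `2B` positions of the busNNN column model:
the product of the transpositions `(2j+1, 2j+2)` for `j = 0, …, B-2`. -/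
def interLayer (B : ℕ) : Equiv.Perm (Fin (2 * B)) :=
  ((List.range (B - 1)).attach.map (fun j =>
    Equiv.swap ⟨2 * j.1 + 1, by have := List.mem_range.mp j.2; omega⟩
               ⟨2 * j.1 + 2, by have := List.mem_range.mp j.2; omega⟩)).prod

/-- The intra-bus layer `A` on the `2B` positions of the busNNN column model:
the product of the transpositions `(2j, 2j+1)` for `j = 0, …, B-2`
(i.e. on every bus except the last). -/
def intraLayer (B : ℕ) : Equiv.Perm (Fin (2 * B)) :=
  ((List.range (B - 1)).attach.map (fun j =>
    Equiv.swap ⟨2 * j.1, by have := List.mem_range.mp j.2; omega⟩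
               ⟨2 * j.1 + 1, by have := List.mem_range.mp j.2; omega⟩)).prod

/-- The layers of the busNNN swap strategy: `I, A, I, A, …`, starting with `I`
(`busLayers B t` is the `(t+1)`-st layer `π_{t+1}`). -/
def busLayers (B : ℕ) (t : ℕ) : Equiv.Perm (Fin (2 * B)) :=
  if t % 2 = 0 then interLayer B else intraLayer B

/-- The positions `x` and `y` together occupy bus `j`, i.e. `{x, y} = {2j, 2j+1}`. -/
def OnBus (B j : ℕ) (x y : Fin (2 * B)) : Prop :=
  (x.1 = 2 * j ∧ y.1 = 2 * j + 1) ∨ (x.1 = 2 * j + 1 ∧ y.1 = 2 * j)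

noncomputable def gI (B j : ℕ) : Equiv.Perm (Fin (2 * B)) :=
  if h : j < B - 1 then
    Equiv.swap ⟨2 * j + 1, by omega⟩ ⟨2 * j + 2, by omega⟩ else 1

noncomputable def gA (B j : ℕ) : Equiv.Perm (Fin (2 * B)) :=
  if h : j < B - 1 then
    Equiv.swap ⟨2 * j, by omega⟩ ⟨2 * j + 1, by omega⟩ else 1

lemma interLayer_eq (B : ℕ) : interLayer B = ((List.range (B - 1)).map (gI B)).prod := by
  unfold interLayer
  congr 1
  rw [← List.attach_map_val (l := List.range (B - 1)) (f := gI B)]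
  apply List.map_congr_left
  rintro ⟨j, hj⟩ _
  have h := List.mem_range.mp hj
  simp only [gI, dif_pos h]

lemma intraLayer_eq (B : ℕ) : intraLayer B = ((List.range (B - 1)).map (gA B)).prod := by
  unfold intraLayer
  congr 1
  rw [← List.attach_map_val (l := List.range (B - 1)) (f := gA B)]
  apply List.map_congr_left
  rintro ⟨j, hj⟩ _
  have h := List.mem_range.mp hj
  simp only [gA, dif_pos h]

lemma gI_prod_eval (B : ℕ) (n : ℕ) (hn : n ≤ B - 1) (x : Fin (2 * B)) :
    ((((List.range n).map (gI B)).prod) x).1 =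
      if 1 ≤ x.1 ∧ x.1 ≤ 2 * n then (if x.1 % 2 = 1 then x.1 + 1 else x.1 - 1)
      else x.1 := by
  induction n generalizing x with
  | zero => simp; split_ifs <;> omega
  | succ n ih =>
    have hn' : n ≤ B - 1 := by omega
    have hlt : n < B - 1 := by omega
    rw [List.range_succ, List.map_append, List.prod_append]
    simp only [List.map_cons, List.map_nil, List.prod_cons, List.prod_nil, mul_one]
    rw [Equiv.Perm.mul_apply]
    rw [show gI B n = Equiv.swap ⟨2 * n + 1, by omega⟩ ⟨2 * n + 2, by omega⟩ from dif_pos hlt]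
    rcases eq_or_ne x.1 (2 * n + 1) with hx | hx1
    · have hxe : x = ⟨2 * n + 1, by omega⟩ := Fin.ext hx
      rw [hxe, Equiv.swap_apply_left, ih hn']
      simp only [Fin.val_mk]
      split_ifs <;> omega
    · rcases eq_or_ne x.1 (2 * n + 2) with hx | hx2
      · have hxe : x = ⟨2 * n + 2, by omega⟩ := Fin.ext hx
        rw [hxe, Equiv.swap_apply_right, ih hn']
        simp only [Fin.val_mk]
        split_ifs <;> omega
      · rw [Equiv.swap_apply_of_ne_of_ne (fun h => hx1 (by rw [h]))
            (fun h => hx2 (by rw [h])), ih hn' x]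
        split_ifs <;> omega

lemma gA_prod_eval (B : ℕ) (n : ℕ) (hn : n ≤ B - 1) (x : Fin (2 * B)) :
    ((((List.range n).map (gA B)).prod) x).1 =
      if x.1 + 1 ≤ 2 * n then (if x.1 % 2 = 0 then x.1 + 1 else x.1 - 1)
      else x.1 := by
  induction n generalizing x with
  | zero => simp
  | succ n ih =>
    have hn' : n ≤ B - 1 := by omega
    have hlt : n < B - 1 := by omega
    rw [List.range_succ, List.map_append, List.prod_append]
    simp only [List.map_cons, List.map_nil, List.prod_cons, List.prod_nil, mul_one]
    rw [Equiv.Perm.mul_apply]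
    rw [show gA B n = Equiv.swap ⟨2 * n, by omega⟩ ⟨2 * n + 1, by omega⟩ from dif_pos hlt]
    rcases eq_or_ne x.1 (2 * n) with hx | hx1
    · have hxe : x = ⟨2 * n, by omega⟩ := Fin.ext hx
      rw [hxe, Equiv.swap_apply_left, ih hn']
      simp only [Fin.val_mk]
      split_ifs <;> omega
    · rcases eq_or_ne x.1 (2 * n + 1) with hx | hx2
      · have hxe : x = ⟨2 * n + 1, by omega⟩ := Fin.ext hx
        rw [hxe, Equiv.swap_apply_right, ih hn']
        simp only [Fin.val_mk]
        split_ifs <;> omega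
      · rw [Equiv.swap_apply_of_ne_of_ne (fun h => hx1 (by rw [h]))
            (fun h => hx2 (by rw [h])), ih hn' x]
        split_ifs <;> omega

def Ival (B x : ℕ) : ℕ :=
  if 1 ≤ x ∧ x ≤ 2 * B - 2 then (if x % 2 = 1 then x + 1 else x - 1) else x

def Aval (B x : ℕ) : ℕ :=
  if x + 1 ≤ 2 * B - 2 then (if x % 2 = 0 then x + 1 else x - 1) else x

def phi (B u : ℕ) : ℕ :=
  if u = 0 then 0 else if u ≤ B - 1 then 2 * u - 1 else 4 * B - 2 - 2 * u

lemma phi_lt (B u : ℕ) (hB : 2 ≤ B) (hu : u < 2 * B - 1) : phi B u < 2 * B - 1 := by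
  unfold phi; split_ifs <;> first | exact ‹False›.elim | omega

lemma Iphi (B u : ℕ) (hB : 2 ≤ B) (hu : u < 2 * B - 1) :
    Ival B (phi B u) = phi B ((2 * B - 1 - u) % (2 * B - 1)) := by
  have h1 : (2 * B - 1 - u) % (2 * B - 1) = if u = 0 then 0 else 2 * B - 1 - u := by
    split_ifs with h
    · subst h; simp [Nat.mod_self]
    · exact Nat.mod_eq_of_lt (by omega)
  rw [h1]
  unfold Ival phi
  split_ifs <;> first | exact ‹False›.elim | omega

lemma phi_eq_zero (B : ℕ) : phi B 0 = 0 := by unfold phi; simp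

lemma phi_low (B u : ℕ) (h1 : 1 ≤ u) (h2 : u ≤ B - 1) : phi B u = 2 * u - 1 := by
  unfold phi; split_ifs <;> first | exact ‹False›.elim | omega

lemma phi_high (B u : ℕ) (h1 : B - 1 < u) : phi B u = 4 * B - 2 - 2 * u := by
  unfold phi; split_ifs <;> first | exact ‹False›.elim | omega

lemma Aphi (B u : ℕ) (hB : 2 ≤ B) (hu : u < 2 * B - 1) :
    Aval B (phi B u) = phi B ((1 + (2 * B - 1 - u) % (2 * B - 1)) % (2 * B - 1)) := by
  rcases eq_or_ne u 0 with h | h0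
  · subst h
    rw [Nat.sub_zero, Nat.mod_self, show (1 + 0) % (2 * B - 1) = 1 from Nat.mod_eq_of_lt (by omega)]
    rw [phi_eq_zero, phi_low B 1 le_rfl (by omega)]
    unfold Aval
    split_ifs <;> first | exact ‹False›.elim | omega
  · rcases eq_or_ne u 1 with h | h1
    · subst h
      rw [show (2 * B - 1 - 1) % (2 * B - 1) = 2 * B - 2 from Nat.mod_eq_of_lt (by omega),
        show 1 + (2 * B - 2) = 2 * B - 1 by omega, Nat.mod_self]
      rw [phi_eq_zero, phi_low B 1 le_rfl (by omega)]
      unfold Aval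
      split_ifs <;> first | exact ‹False›.elim | omega
    · rw [show (2 * B - 1 - u) % (2 * B - 1) = 2 * B - 1 - u from Nat.mod_eq_of_lt (by omega),
        show (1 + (2 * B - 1 - u)) % (2 * B - 1) = 2 * B - u from by
          rw [Nat.mod_eq_of_lt (by omega)]; omega]
      rcases le_or_gt u (B - 1) with hc | hc
      · rw [phi_low B u (by omega) hc, phi_high B (2 * B - u) (by omega)]
        unfold Aval
        split_ifs <;> first | exact ‹False›.elim | omega
      · rcases le_or_gt (2 * B - u) (B - 1) with hd | hd
        · rw [phi_high B u hc, phi_low B (2 * B - u) (by omega) hd]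
          unfold Aval
          split_ifs <;> first | exact ‹False›.elim | omega
        · rw [phi_high B u hc, phi_high B (2 * B - u) hd]
          unfold Aval
          split_ifs <;> first | exact ‹False›.elim | omega

lemma interLayer_val (B : ℕ) (hB : 2 ≤ B) (x : Fin (2 * B)) :
    ((interLayer B) x).1 = Ival B x.1 := by
  rw [interLayer_eq, gI_prod_eval B (B - 1) le_rfl]
  unfold Ival
  split_ifs <;> first | exact ‹False›.elim | omega

lemma intraLayer_val (B : ℕ) (hB : 2 ≤ B) (x : Fin (2 * B)) :
    ((intraLayer B) x).1 = Aval B x.1 := by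
  rw [intraLayer_eq, gA_prod_eval B (B - 1) le_rfl]
  unfold Aval
  split_ifs <;> first | exact ‹False›.elim | omega

def posc (B t u : ℕ) : ℕ :=
  if t % 2 = 0 then (u + t / 2) % (2 * B - 1)
  else (2 * B - 1 - (u + t / 2) % (2 * B - 1)) % (2 * B - 1)

lemma posc_lt (B t u : ℕ) (hB : 2 ≤ B) : posc B t u < 2 * B - 1 := by
  unfold posc
  split_ifs <;> exact Nat.mod_lt _ (by omega)

lemma traj (B : ℕ) (hB : 2 ≤ B) (t u : ℕ) (hu : u < 2 * B - 1) (x : Fin (2 * B))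
    (hx : x.1 = phi B u) :
    (cumul (busLayers B) t x).1 = phi B (posc B t u) := by
  induction t with
  | zero =>
    show x.1 = _
    rw [hx]
    unfold posc
    rw [if_pos rfl]
    norm_num [Nat.mod_eq_of_lt hu]
  | succ t ih =>
    rw [show cumul (busLayers B) (t+1) = busLayers B t * cumul (busLayers B) t from rfl,
      Equiv.Perm.mul_apply]
    rcases Nat.even_or_odd t with he | ho
    · have ht : t % 2 = 0 := Nat.even_iff.mp he
      rw [show busLayers B t = interLayer B from if_pos ht]
      rw [interLayer_val B hB, ih]
      have hlt : posc B t u < 2 * B - 1 := posc_lt B t u hB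
      rw [Iphi B _ hB hlt]
      congr 1
      unfold posc
      rw [if_pos ht, if_neg (by omega), show (t+1)/2 = t/2 by omega]
    · have ht : t % 2 = 1 := Nat.odd_iff.mp ho
      rw [show busLayers B t = intraLayer B from if_neg (by omega)]
      rw [intraLayer_val B hB, ih]
      have hlt : posc B t u < 2 * B - 1 := posc_lt B t u hB
      rw [Aphi B _ hB hlt]
      congr 1
      unfold posc
      rw [if_neg (by omega), if_pos (by omega), show (t+1)/2 = t/2 + 1 by omega]
      -- ⊢ (1 + (2B-1 - (2B-1 - (u + t/2) % N) % N) % N) % N = (u + (t/2 + 1)) % N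
      set N := 2 * B - 1 with hN
      set m := (u + t / 2) % N with hm
      have hmlt : m < N := Nat.mod_lt _ (by omega)
      have h2 : (N - (N - m) % N) % N = m := by
        rcases Nat.eq_zero_or_pos m with h0 | h0
        · rw [h0, Nat.sub_zero, Nat.mod_self, Nat.sub_zero, Nat.mod_self]
        · rw [Nat.mod_eq_of_lt (show N - m < N by omega),
            show N - (N - m) = m by omega, Nat.mod_eq_of_lt hmlt]
      rw [h2]
      rw [show u + (t / 2 + 1) = (u + t / 2) + 1 by omega, Nat.add_mod (u + t/2) 1 N, ← hm]
      rw [Nat.mod_eq_of_lt (show (1:ℕ) < N by omega)]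
      rw [Nat.add_comm 1 m]

lemma traj_last (B : ℕ) (hB : 2 ≤ B) (t : ℕ) (x : Fin (2 * B)) (hx : x.1 = 2 * B - 1) :
    (cumul (busLayers B) t x).1 = 2 * B - 1 := by
  induction t with
  | zero => exact hx
  | succ t ih =>
    rw [show cumul (busLayers B) (t+1) = busLayers B t * cumul (busLayers B) t from rfl,
      Equiv.Perm.mul_apply]
    rcases Nat.even_or_odd t with he | ho
    · rw [show busLayers B t = interLayer B from if_pos (Nat.even_iff.mp he)]
      rw [interLayer_val B hB, ih]
      unfold Ival
      rw [if_neg (by omega)]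
    · rw [show busLayers B t = intraLayer B from if_neg (by have := Nat.odd_iff.mp ho; omega)]
      rw [intraLayer_val B hB, ih]
      unfold Aval
      rw [if_neg (by omega)]

lemma posc_even (B t : ℕ) (ht : t % 2 = 0) (u : ℕ) :
    posc B t u = (u + t / 2) % (2 * B - 1) := if_pos ht

lemma posc_odd (B t : ℕ) (ht : t % 2 = 1) (u : ℕ) :
    posc B t u = (2 * B - 1 - (u + t / 2) % (2 * B - 1)) % (2 * B - 1) := if_neg (by omega)

lemma exists_theta (B : ℕ) (hB : 2 ≤ B) (x : Fin (2 * B)) (hx : x.1 ≠ 2 * B - 1) :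
    ∃ u < 2 * B - 1, phi B u = x.1 := by
  have hx2 := x.2
  rcases Nat.even_or_odd x.1 with he | ho
  · rcases eq_or_ne x.1 0 with h0 | h0
    · exact ⟨0, by omega, by rw [phi_eq_zero, h0]⟩
    · have hev := Nat.even_iff.mp he
      refine ⟨(4 * B - 2 - x.1) / 2, by omega, ?_⟩
      rw [phi_high B _ (by omega)]
      omega
  · have hod := Nat.odd_iff.mp ho
    refine ⟨(x.1 + 1) / 2, by omega, ?_⟩
    rw [phi_low B _ (by omega) (by omega)]
    omega

lemma bus_of (B : ℕ) (hB : 2 ≤ B) (u v : ℕ) (hu : u < 2 * B - 1) (hv : v < 2 * B - 1)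
    (huv : (u + v) % (2 * B - 1) = 1) (x y : Fin (2 * B)) (hxy : x ≠ y)
    (hx : x.1 = phi B u) (hy : y.1 = phi B v) : ∃ j < B, OnBus B j x y := by
  have hne : u ≠ v := fun h => hxy (Fin.ext (by rw [hx, hy, h]))
  have hsum : u + v = 1 ∨ u + v = 2 * B := by
    rcases lt_or_ge (u + v) (2 * B - 1) with h | h
    · left; rwa [Nat.mod_eq_of_lt h] at huv
    · rw [Nat.mod_eq_sub_mod h, Nat.mod_eq_of_lt (by omega)] at huv; right; omega
  rcases hsum with h | h
  · rcases (by omega : u = 0 ∧ v = 1 ∨ u = 1 ∧ v = 0) with ⟨h1, h2⟩ | ⟨h1, h2⟩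
    · have hx0 : x.1 = 0 := by rw [hx, h1, phi_eq_zero]
      have hy1 : y.1 = 1 := by rw [hy, h2, phi_low B 1 le_rfl (by omega)]
      exact ⟨0, by omega, Or.inl ⟨by omega, by omega⟩⟩
    · have hx0 : x.1 = 1 := by rw [hx, h1, phi_low B 1 le_rfl (by omega)]
      have hy1 : y.1 = 0 := by rw [hy, h2, phi_eq_zero]
      exact ⟨0, by omega, Or.inr ⟨by omega, by omega⟩⟩
  · rcases lt_trichotomy u v with hlt | heq | hlt
    · have hxv : x.1 = 2 * u - 1 := by rw [hx, phi_low B u (by omega) (by omega)]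
      have hyv : y.1 = 2 * u - 2 := by rw [hy, phi_high B v (by omega)]; omega
      exact ⟨u - 1, by omega, Or.inr ⟨by omega, by omega⟩⟩
    · exact (hne heq).elim
    · have hyv : y.1 = 2 * v - 1 := by rw [hy, phi_low B v (by omega) (by omega)]
      have hxv : x.1 = 2 * v - 2 := by rw [hx, phi_high B u (by omega)]; omega
      exact ⟨v - 1, by omega, Or.inl ⟨by omega, by omega⟩⟩

lemma meet_last (B : ℕ) (hB : 2 ≤ B) (β : ℕ) (hβ : β < 2 * B - 1) :
    ∃ t ≤ 4 * B - 5, posc B t β = B := by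
  set N := 2 * B - 1 with hN
  set r := (B + N - β) % N with hr
  have hrlt : r < N := Nat.mod_lt _ (by omega)
  have hkey : (β + r) % N = B := by
    have h1 : β + r ≡ β + (B + N - β) [MOD N] := (Nat.mod_modEq _ N).add_left β
    have h2 : β + (B + N - β) = B + N := by omega
    unfold Nat.ModEq at h1
    rw [h2] at h1
    rw [h1, Nat.add_mod_right, Nat.mod_eq_of_lt (by omega)]
  rcases le_or_gt r (2 * B - 3) with hc | hc
  · refine ⟨2 * r, by omega, ?_⟩
    rw [posc_even B (2 * r) (by omega), show 2 * r / 2 = r by omega]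
    exact hkey
  · have hre2 : r = 2 * B - 2 := by omega
    refine ⟨2 * (2 * B - 3) + 1, by omega, ?_⟩
    rw [posc_odd B _ (by omega), show (2 * (2 * B - 3) + 1) / 2 = 2 * B - 3 by omega]
    have hq := Nat.div_add_mod (β + r) N
    rw [hkey] at hq
    have h3 : β + (2 * B - 3) = N * ((β + r) / N) + (B - 1) := by omega
    rw [h3, Nat.mul_add_mod, Nat.mod_eq_of_lt (show B - 1 < N by omega)]
    rw [show N - (B - 1) = B by omega, Nat.mod_eq_of_lt (by omega)]

lemma meet_pair (B : ℕ) (hB : 2 ≤ B) (α β : ℕ) (hα : α < 2 * B - 1) (hβ : β < 2 * B - 1) :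
    ∃ t ≤ 4 * B - 5, (posc B t α + posc B t β) % (2 * B - 1) = 1 := by
  set N := 2 * B - 1 with hN
  set S := (α + β) % N with hS
  have hSlt : S < N := Nat.mod_lt _ (by omega)
  set r := (B * (1 + N - S)) % N with hr
  have hrlt : r < N := Nat.mod_lt _ (by omega)
  have hkey : (α + β + 2 * r) % N = 1 := by
    have e1 : 2 * r ≡ 2 * (B * (1 + N - S)) [MOD N] := (Nat.mod_modEq _ N).mul_left 2
    have e2 : 2 * (B * (1 + N - S)) = (2 * B) * (1 + N - S) := by ring
    have e3 : (2 * B) * (1 + N - S) ≡ 1 * (1 + N - S) [MOD N] := by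
      refine Nat.ModEq.mul_right _ ?_
      show (2 * B) % N = 1 % N
      rw [show 2 * B = 1 + N by omega, Nat.add_mod_right]
    have e5 : 2 * r ≡ 1 * (1 + N - S) [MOD N] := (e2 ▸ e1).trans e3
    have e4 : α + β ≡ S [MOD N] := (Nat.mod_modEq _ N).symm
    have e6 : α + β + 2 * r ≡ S + 1 * (1 + N - S) [MOD N] := e4.add e5
    have e7 : S + 1 * (1 + N - S) = 1 + N := by omega
    unfold Nat.ModEq at e6
    rw [e7] at e6
    rw [e6, Nat.add_mod_right, Nat.mod_eq_of_lt (by omega)]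
  rcases le_or_gt r (2 * B - 3) with hc | hc
  · refine ⟨2 * r, by omega, ?_⟩
    have ht2 : (2 * r) % 2 = 0 := by omega
    simp only [posc_even B (2 * r) ht2]
    rw [← hN, ← Nat.add_mod,
      show α + 2 * r / 2 + (β + 2 * r / 2) = α + β + 2 * r by omega]
    exact hkey
  · have hre2 : r = 2 * B - 2 := by omega
    refine ⟨2 * (2 * B - 3) + 1, by omega, ?_⟩
    have ht2 : (2 * (2 * B - 3) + 1) % 2 = 1 := by omega
    simp only [posc_odd B _ ht2, show (2 * (2 * B - 3) + 1) / 2 = 2 * B - 3 by omega, ← hN]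
    set m1 := (α + (2 * B - 3)) % N with hm1
    set m2 := (β + (2 * B - 3)) % N with hm2
    have hm1lt : m1 < N := Nat.mod_lt _ (by omega)
    have hm2lt : m2 < N := Nat.mod_lt _ (by omega)
    have hsum : (m1 + m2) % N = N - 1 := by
      rw [hm1, hm2, ← Nat.add_mod]
      have hq0 := Nat.div_add_mod (α + β + 2 * r) N
      rw [hkey] at hq0
      rcases Nat.eq_zero_or_pos ((α + β + 2 * r) / N) with hz | hz
      · rw [hz, Nat.mul_zero] at hq0; omega
      · obtain ⟨q1, hq1e⟩ : ∃ q1, (α + β + 2 * r) / N = q1 + 1 :=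
          ⟨_, (Nat.succ_pred_eq_of_pos hz).symm⟩
        rw [hq1e, Nat.mul_add, Nat.mul_one] at hq0
        rw [show α + (2 * B - 3) + (β + (2 * B - 3)) = N * q1 + (N - 1) by omega,
          Nat.mul_add_mod, Nat.mod_eq_of_lt (by omega)]
    rcases Nat.eq_zero_or_pos m1 with h0 | h0
    · have hm2v : m2 = N - 1 := by rwa [h0, Nat.zero_add, Nat.mod_eq_of_lt hm2lt] at hsum
      rw [h0, hm2v, Nat.sub_zero, Nat.mod_self, show N - (N - 1) = 1 by omega,
        Nat.mod_eq_of_lt (show (1:ℕ) < N by omega), Nat.zero_add]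
      exact Nat.mod_eq_of_lt (by omega)
    · rcases Nat.eq_zero_or_pos m2 with h0' | h0'
      · have hm1v : m1 = N - 1 := by rwa [h0', Nat.add_zero, Nat.mod_eq_of_lt hm1lt] at hsum
        rw [h0', hm1v, Nat.sub_zero, Nat.mod_self, show N - (N - 1) = 1 by omega,
          Nat.mod_eq_of_lt (show (1:ℕ) < N by omega), Nat.add_zero]
        exact Nat.mod_eq_of_lt (by omega)
      · rw [Nat.mod_eq_of_lt (show N - m1 < N by omega),
          Nat.mod_eq_of_lt (show N - m2 < N by omega)]
        have hcases : m1 + m2 = N - 1 ∨ m1 + m2 = 2 * N - 1 := by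
          rcases lt_or_ge (m1 + m2) N with h | h
          · left; rwa [Nat.mod_eq_of_lt h] at hsum
          · rw [Nat.mod_eq_sub_mod h, Nat.mod_eq_of_lt (by omega)] at hsum; omega
        rcases hcases with h | h
        · rw [show N - m1 + (N - m2) = 1 + N by omega, Nat.add_mod_right,
            Nat.mod_eq_of_lt (by omega)]
        · rw [show N - m1 + (N - m2) = 1 by omega, Nat.mod_eq_of_lt (by omega)]

/-- For every `B ≥ 2`, the busNNN swap strategy run for `4B - 5`
layers reaches full connectivity: for every pair of distinct columns `a ≠ b` there
is a time `t ≤ 4B - 5` such that `σ_t a` and `σ_t b` lie on a common bus `j < B`. -/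
theorem busNNN_full_connectivity (B : ℕ) (hB : 2 ≤ B) :
    ∀ a b : Fin (2 * B), a ≠ b → ∃ t ≤ 4 * B - 5, ∃ j < B,
      OnBus B j (cumul (busLayers B) t a) (cumul (busLayers B) t b) := by
  intro a b hab
  by_cases ha : a.1 = 2 * B - 1
  · by_cases hb : b.1 = 2 * B - 1
    · exact absurd (Fin.ext (ha.trans hb.symm)) hab
    · obtain ⟨β, hβ, hphib⟩ := exists_theta B hB b hb
      obtain ⟨t, ht, hpos⟩ := meet_last B hB β hβ
      refine ⟨t, ht, B - 1, by omega, ?_⟩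
      have hxa : (cumul (busLayers B) t a).1 = 2 * B - 1 := traj_last B hB t a ha
      have hxb : (cumul (busLayers B) t b).1 = 2 * B - 2 := by
        rw [traj B hB t β hβ b hphib.symm, hpos, phi_high B B (by omega)]
        omega
      exact Or.inr ⟨by omega, by omega⟩
  · by_cases hb : b.1 = 2 * B - 1
    · obtain ⟨α, hα, hphia⟩ := exists_theta B hB a ha
      obtain ⟨t, ht, hpos⟩ := meet_last B hB α hα
      refine ⟨t, ht, B - 1, by omega, ?_⟩
      have hxb : (cumul (busLayers B) t b).1 = 2 * B - 1 := traj_last B hB t b hb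
      have hxa : (cumul (busLayers B) t a).1 = 2 * B - 2 := by
        rw [traj B hB t α hα a hphia.symm, hpos, phi_high B B (by omega)]
        omega
      exact Or.inl ⟨by omega, by omega⟩
    · obtain ⟨α, hα, hphia⟩ := exists_theta B hB a ha
      obtain ⟨β, hβ, hphib⟩ := exists_theta B hB b hb
      obtain ⟨t, ht, hsum⟩ := meet_pair B hB α β hα hβ
      refine ⟨t, ht, ?_⟩
      exact bus_of B hB (posc B t α) (posc B t β) (posc_lt B t α hB) (posc_lt B t β hB)
        hsum _ _ (fun h => hab ((cumul (busLayers B) t).injective h))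
        (traj B hB t α hα a hphia.symm) (traj B hB t β hβ b hphib.symm)
end
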